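/- Let S ⊆ ℤ be a finite nonempty aligned source, and let C = {q ∈ ℤ : min S ≤ q ≤ max S and q ≡ min S (mod 2)} be the smallest compact source containing S. Let v(X) := ∪_{q∈X} {q−1, q, q+1} for X ⊆ ℤ, and let P(t) := Σ_T (−t)^{|T|} ∈ ℤ[t], the sum ranging over all (finite) subsets T of v(C) ∖ v(S) whose elements are pairwise at distance at least 2. Then, in ℤ[[t]], ℋ_S(t) · t^{|C|−|S|} = P(t) · ℋ_C(t). -/

import Mathlib

/-- A triangular-lattice directed animal over positions `Q ⊆ ℤ` with source `S`:
sites on line `0` are exactly the source, and every higher site is supported at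
the left, at the right, or at the center (two lines below). -/
def IsTriAnimal (Q : Set ℤ) (S : Finset ℤ) (A : Finset (ℤ × ℕ)) : Prop :=
  (∀ x ∈ A, x.1 ∈ Q) ∧
  (∀ q : ℤ, (q, 0) ∈ A ↔ q ∈ S) ∧
  ∀ x ∈ A, 1 ≤ x.2 →
    (x.1 - 1, x.2 - 1) ∈ A ∨ (x.1 + 1, x.2 - 1) ∈ A ∨ (2 ≤ x.2 ∧ (x.1, x.2 - 2) ∈ A)

/-- A square-lattice directed animal over positions `Q ⊆ ℤ` with source `S`. -/
def IsSqAnimal (Q : Set ℤ) (S : Finset ℤ) (A : Finset (ℤ × ℕ)) : Prop :=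
  (∀ x ∈ A, x.1 ∈ Q) ∧
  (∀ q : ℤ, (q, 0) ∈ A ↔ q ∈ S) ∧
  ∀ x ∈ A, 1 ≤ x.2 →
    (x.1 - 1, x.2 - 1) ∈ A ∨ (x.1 + 1, x.2 - 1) ∈ A

/-- Number of triangular-lattice directed animals over `Q` with source `S` and area `n`. -/
noncomputable def triCount (Q : Set ℤ) (S : Finset ℤ) (n : ℕ) : ℕ :=
  {A : Finset (ℤ × ℕ) | IsTriAnimal Q S A ∧ A.card = n}.ncard

/-- Number of square-lattice directed animals over `Q` with source `S` and area `n`. -/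
noncomputable def sqCount (Q : Set ℤ) (S : Finset ℤ) (n : ℕ) : ℕ :=
  {A : Finset (ℤ × ℕ) | IsSqAnimal Q S A ∧ A.card = n}.ncard

/-- Generating function of triangular-lattice directed animals over `Q` with source `S`. -/
noncomputable def triGF (Q : Set ℤ) (S : Finset ℤ) : PowerSeries ℤ :=
  PowerSeries.mk fun n => (triCount Q S n : ℤ)

/-- Generating function of square-lattice directed animals over `Q` with source `S`. -/
noncomputable def sqGF (Q : Set ℤ) (S : Finset ℤ) : PowerSeries ℤ :=
  PowerSeries.mk fun n => (sqCount Q S n : ℤ)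
/-- `vnbr X = ∪_{q ∈ X} {q-1, q, q+1}`. -/
def vnbr (X : Finset ℤ) : Finset ℤ := X.biUnion fun q => {q - 1, q, q + 1}



open Finset

noncomputable section
open scoped Classical

abbrev Pc := ℤ × ℕ

/-- weight-1 (heap heights) -/
def w1 : ℤ → ℤ → ℕ := fun _ _ => 1
/-- animal-level weight -/
def wl : ℤ → ℤ → ℕ := fun a b => if a = b then 2 else 1

lemma w1_pos (a b : ℤ) : 1 ≤ w1 a b := le_refl 1
lemma wl_pos (a b : ℤ) : 1 ≤ wl a b := by unfold wl; split <;> omega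

/-- generalized height function: longest weighted chain of conflicting pieces below. -/
def hgt (w : ℤ → ℤ → ℕ) (F : Finset Pc) (x : Pc) : ℕ :=
  (F.filter fun y => |y.1 - x.1| ≤ 1 ∧ y.2 < x.2).attach.sup
    (fun y => hgt w F y.1 + w y.1.1 x.1)
termination_by x.2
decreasing_by exact (Finset.mem_filter.mp y.2).2.2

lemma hgt_eq (w : ℤ → ℤ → ℕ) (F : Finset Pc) (x : Pc) :
    hgt w F x = (F.filter fun y => |y.1 - x.1| ≤ 1 ∧ y.2 < x.2).sup
      (fun y => hgt w F y + w y.1 x.1) := by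
  rw [hgt]
  exact Finset.sup_attach (F.filter fun y => |y.1 - x.1| ≤ 1 ∧ y.2 < x.2)
    (fun y => hgt w F y + w y.1 x.1)

lemma le_hgt {w : ℤ → ℤ → ℕ} {F : Finset Pc} {x y : Pc} (hy : y ∈ F)
    (hcf : |y.1 - x.1| ≤ 1) (hlt : y.2 < x.2) :
    hgt w F y + w y.1 x.1 ≤ hgt w F x := by
  conv_rhs => rw [hgt_eq]
  exact Finset.le_sup (f := fun y => hgt w F y + w y.1 x.1)
    (Finset.mem_filter.mpr ⟨hy, hcf, hlt⟩)

lemma hgt_lt {w : ℤ → ℤ → ℕ} (hw : ∀ a b, 1 ≤ w a b) {F : Finset Pc} {x y : Pc} (hy : y ∈ F)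
    (hcf : |y.1 - x.1| ≤ 1) (hlt : y.2 < x.2) : hgt w F y < hgt w F x :=
  lt_of_lt_of_le (by have := hw y.1 x.1; omega) (le_hgt hy hcf hlt)

lemma hgt_of_rank_zero (w : ℤ → ℤ → ℕ) (F : Finset Pc) (x : Pc) (hx : x.2 = 0) :
    hgt w F x = 0 := by
  rw [hgt_eq]
  have : (F.filter fun y => |y.1 - x.1| ≤ 1 ∧ y.2 < x.2) = ∅ := by
    apply Finset.filter_eq_empty_iff.mpr
    intro y _
    rw [hx]; rintro ⟨-, h⟩; omega
  rw [this, Finset.sup_empty]; rfl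

lemma hgt_exists {w : ℤ → ℤ → ℕ} {F : Finset Pc} {x : Pc} (h : 1 ≤ hgt w F x) :
    ∃ y ∈ F, |y.1 - x.1| ≤ 1 ∧ y.2 < x.2 ∧ hgt w F x = hgt w F y + w y.1 x.1 := by
  rw [hgt_eq] at h ⊢
  have hne : (F.filter fun y => |y.1 - x.1| ≤ 1 ∧ y.2 < x.2).Nonempty := by
    by_contra hemp
    rw [Finset.not_nonempty_iff_eq_empty.mp hemp, Finset.sup_empty] at h
    exact absurd h (by simp [bot_eq_zero])
  obtain ⟨y, hy, hval⟩ := Finset.exists_mem_eq_sup _ hne (fun y => hgt w F y + w y.1 x.1)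
  rw [Finset.mem_filter] at hy
  exact ⟨y, hy.1, hy.2.1, hy.2.2, hval⟩

/-- Admissible: conflicting distinct pieces have distinct ranks. -/
def Adm (F : Finset Pc) : Prop :=
  ∀ x ∈ F, ∀ y ∈ F, x ≠ y → |x.1 - y.1| ≤ 1 → x.2 ≠ y.2

lemma Adm.subset {F G : Finset Pc} (hG : G ⊆ F) (hF : Adm F) : Adm G :=
  fun x hx y hy => hF x (hG hx) y (hG hy)

lemma hgt_lt_iff {w : ℤ → ℤ → ℕ} (hw : ∀ a b, 1 ≤ w a b) {F : Finset Pc} (hF : Adm F)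
    {x y : Pc} (hx : x ∈ F) (hy : y ∈ F) (hcf : |x.1 - y.1| ≤ 1) :
    y.2 < x.2 ↔ hgt w F y < hgt w F x := by
  constructor
  · intro h; exact hgt_lt hw hy (by rw [abs_sub_comm]; exact hcf) h
  · intro h
    rcases lt_trichotomy y.2 x.2 with h' | h' | h'
    · exact h'
    · exfalso
      rcases eq_or_ne x y with rfl | hne
      · omega
      · exact hF x hx y hy hne hcf h'.symm
    · have hcf2 : |x.1 - y.1| ≤ 1 := hcf
      exact absurd (hgt_lt hw hx hcf2 h') (by omega)

/-- transport of heights along position-preserving, order-preserving maps -/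
lemma hgt_image (w : ℤ → ℤ → ℕ) (F : Finset Pc) (f : Pc → Pc)
    (hpos : ∀ x ∈ F, (f x).1 = x.1)
    (hord : ∀ x ∈ F, ∀ y ∈ F, |y.1 - x.1| ≤ 1 → (y.2 < x.2 ↔ (f y).2 < (f x).2)) :
    ∀ x ∈ F, hgt w (F.image f) (f x) = hgt w F x := by
  have main : ∀ n, ∀ x ∈ F, x.2 = n → hgt w (F.image f) (f x) = hgt w F x := by
    intro n
    induction n using Nat.strong_induction_on with
    | _ n IH =>
      intro x hx hxn
      rw [hgt_eq w (F.image f) (f x), hgt_eq w F x]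
      rw [Finset.filter_image]
      have hset : (F.filter fun a => |(f a).1 - (f x).1| ≤ 1 ∧ (f a).2 < (f x).2)
          = F.filter (fun y => |y.1 - x.1| ≤ 1 ∧ y.2 < x.2) := by
        apply Finset.filter_congr
        intro y hy
        rw [hpos y hy, hpos x hx]
        simp only [eq_iff_iff, and_congr_right_iff]
        intro hcf
        exact (hord x hx y hy hcf).symm
      rw [hset, Finset.sup_image]
      apply Finset.sup_congr rfl
      intro y hy
      rw [Finset.mem_filter] at hy
      have := IH y.2 (by omega) y hy.1 rfl
      simp only [Function.comp_apply, this, hpos y hy.1, hpos x hx]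
  exact fun x hx => main x.2 x hx rfl

def lev0 (K : Finset Pc) : Finset ℤ := (K.filter fun x => x.2 = 0).image Prod.fst

lemma mem_lev0 {K : Finset Pc} {p : ℤ} : p ∈ lev0 K ↔ (p, 0) ∈ K := by
  unfold lev0
  simp only [Finset.mem_image, Finset.mem_filter]
  constructor
  · rintro ⟨x, ⟨hx, h0⟩, rfl⟩
    have : x = (x.1, 0) := by
      cases x; simp_all
    rwa [← this]
  · intro h; exact ⟨(p, 0), ⟨h, rfl⟩, rfl⟩

def IsHeap (K : Finset Pc) : Prop :=
  Adm K ∧ ∀ x ∈ K, 1 ≤ x.2 → ∃ y ∈ K, |y.1 - x.1| ≤ 1 ∧ y.2 + 1 = x.2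

lemma hgt_heap {K : Finset Pc} (hK : IsHeap K) : ∀ x ∈ K, hgt w1 K x = x.2 := by
  have main : ∀ n, ∀ x ∈ K, x.2 = n → hgt w1 K x = x.2 := by
    intro n
    induction n using Nat.strong_induction_on with
    | _ n IH =>
      intro x hx hxn
      apply le_antisymm
      · rw [hgt_eq]
        apply Finset.sup_le
        intro y hy
        rw [Finset.mem_filter] at hy
        rw [IH y.2 (by omega) y hy.1 rfl]
        have h2 := hy.2.2
        have h3 : w1 y.1 x.1 = 1 := rfl
        omega
      · rcases Nat.eq_zero_or_pos x.2 with h0 | h1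
        · omega
        · obtain ⟨y, hy, hcf, hrk⟩ := hK.2 x hx h1
          have h4 := le_hgt (w := w1) hy hcf (by omega)
          rw [IH y.2 (by omega) y hy rfl] at h4
          have h3 : w1 y.1 x.1 = 1 := rfl
          omega
  exact fun x hx => main x.2 x hx rfl

def nrm (w : ℤ → ℤ → ℕ) (F : Finset Pc) : Finset Pc :=
  F.image fun x => (x.1, hgt w F x)

lemma nrm_injOn {w : ℤ → ℤ → ℕ} (hw : ∀ a b, 1 ≤ w a b) {F : Finset Pc} (hF : Adm F) :
    Set.InjOn (fun x => (x.1, hgt w F x)) F := by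
  intro x hx y hy hxy
  simp only [Prod.mk.injEq] at hxy
  by_contra hne
  have hcf : |x.1 - y.1| ≤ 1 := by rw [hxy.1]; simp
  have := hF x hx y hy hne hcf
  rcases lt_trichotomy x.2 y.2 with h | h | h
  · have := hgt_lt hw hx hcf h
    omega
  · exact this h
  · have hcf2 : |y.1 - x.1| ≤ 1 := by rw [abs_sub_comm]; exact hcf
    have := hgt_lt hw hy hcf2 h
    omega

lemma nrm_card {w : ℤ → ℤ → ℕ} (hw : ∀ a b, 1 ≤ w a b) {F : Finset Pc} (hF : Adm F) :
    (nrm w F).card = F.card :=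
  Finset.card_image_of_injOn (nrm_injOn hw hF)

lemma nrm_isHeap {F : Finset Pc} (hF : Adm F) : IsHeap (nrm w1 F) := by
  constructor
  · rintro z hz z' hz' hne hcf
    simp only [nrm, Finset.mem_image] at hz hz'
    obtain ⟨x, hx, rfl⟩ := hz
    obtain ⟨y, hy, rfl⟩ := hz'
    simp only [ne_eq, Prod.mk.injEq, not_and] at hne ⊢
    intro heq
    by_contra
    have hxy : x ≠ y := by rintro rfl; exact hne rfl heq
    have hcf' : |x.1 - y.1| ≤ 1 := hcf
    have hrk := hF x hx y hy hxy hcf'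
    rcases lt_trichotomy x.2 y.2 with h | h | h
    · have := hgt_lt w1_pos hx hcf' h
      omega
    · exact hrk h
    · have hcf2 : |y.1 - x.1| ≤ 1 := by rw [abs_sub_comm]; exact hcf'
      have := hgt_lt w1_pos hy hcf2 h
      omega
  · rintro z hz h1
    simp only [nrm, Finset.mem_image] at hz
    obtain ⟨x, hx, rfl⟩ := hz
    obtain ⟨y, hy, hcf, _, hval⟩ := hgt_exists (w := w1) (F := F) (x := x) h1
    refine ⟨(y.1, hgt w1 F y), ?_, ?_, ?_⟩
    · exact Finset.mem_image_of_mem _ hy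
    · exact hcf
    · simp only [hval]; unfold w1; omega

lemma mem_vnbr {X : Finset ℤ} {p : ℤ} : p ∈ vnbr X ↔ ∃ s ∈ X, |p - s| ≤ 1 := by
  unfold vnbr
  simp only [Finset.mem_biUnion, Finset.mem_insert, Finset.mem_singleton]
  constructor
  · rintro ⟨s, hs, h⟩
    refine ⟨s, hs, ?_⟩
    rw [abs_le]; omega
  · rintro ⟨s, hs, h⟩
    refine ⟨s, hs, ?_⟩
    rw [abs_le] at h; omega

lemma animal_parity {S : Finset ℤ} {A : Finset Pc} (hA : IsTriAnimal Set.univ S A)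
    {ε : ℤ} (hal : ∀ s ∈ S, s % 2 = ε) :
    ∀ x ∈ A, (x.1 + x.2) % 2 = ε := by
  have main : ∀ n, ∀ x ∈ A, x.2 = n → (x.1 + x.2) % 2 = ε := by
    intro n
    induction n using Nat.strong_induction_on with
    | _ n IH =>
      intro x hx hxn
      rcases Nat.eq_zero_or_pos x.2 with h0 | h1
      · have hx' : (x.1, 0) ∈ A := by rw [← h0]; exact hx
        have h2 := hal x.1 ((hA.2.1 x.1).mp hx')
        omega
      · rcases hA.2.2 x hx h1 with h | h | h
        · have := IH (x.2 - 1) (by omega) _ h rfl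
          simp only at this; omega
        · have := IH (x.2 - 1) (by omega) _ h rfl
          simp only at this; omega
        · have := IH (x.2 - 2) (by omega) _ h.2 rfl
          simp only at this; omega
  exact fun x hx => main x.2 x hx rfl

lemma animal_adm {A : Finset Pc} {ε : ℤ}
    (hpar : ∀ x ∈ A, (x.1 + x.2) % 2 = ε) : Adm A := by
  intro x hx y hy hne hcf heq
  have p1 := hpar x hx
  have p2 := hpar y hy
  rw [abs_le] at hcf
  have h1 : x.1 = y.1 := by omega
  exact hne (Prod.ext h1 heq)

lemma heap_hgt_pos {w : ℤ → ℤ → ℕ} (hw : ∀ a b, 1 ≤ w a b) {K : Finset Pc} (hK : IsHeap K)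
    {x : Pc} (hx : x ∈ K) (h1 : 1 ≤ x.2) : 1 ≤ hgt w K x := by
  obtain ⟨y, hy, hcf, hrk⟩ := hK.2 x hx h1
  have h2 := le_hgt (w := w) hy hcf (by omega)
  have h3 := hw y.1 x.1
  omega

lemma animal_hgt_pos {w : ℤ → ℤ → ℕ} (hw : ∀ a b, 1 ≤ w a b) {S : Finset ℤ} {A : Finset Pc}
    (hA : IsTriAnimal Set.univ S A) {x : Pc} (hx : x ∈ A) (h1 : 1 ≤ x.2) : 1 ≤ hgt w A x := by
  rcases hA.2.2 x hx h1 with h | h | h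
  · have h2 := le_hgt (w := w) (x := x) h
      (by simp only; rw [abs_le]; omega) (by simp only; omega)
    have h3 := hw ((x.1 - 1, x.2 - 1) : Pc).1 x.1
    omega
  · have h2 := le_hgt (w := w) (x := x) h
      (by simp only; rw [abs_le]; omega) (by simp only; omega)
    have h3 := hw ((x.1 + 1, x.2 - 1) : Pc).1 x.1
    omega
  · have h2 := le_hgt (w := w) (x := x) h.2
      (by simp only; rw [abs_le]; omega) (by simp only; omega)
    have h3 := hw ((x.1, x.2 - 2) : Pc).1 x.1
    omega

lemma hgt_animal {S : Finset ℤ} {A : Finset Pc} {ε : ℤ} (hA : IsTriAnimal Set.univ S A)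
    (hpar : ∀ x ∈ A, (x.1 + x.2) % 2 = ε) :
    ∀ x ∈ A, hgt wl A x = x.2 := by
  have main : ∀ n, ∀ x ∈ A, x.2 = n → hgt wl A x = x.2 := by
    intro n
    induction n using Nat.strong_induction_on with
    | _ n IH =>
      intro x hx hxn
      apply le_antisymm
      · rw [hgt_eq]
        apply Finset.sup_le
        intro y hy
        rw [Finset.mem_filter] at hy
        rw [IH y.2 (by omega) y hy.1 rfl]
        have hcf := hy.2.1
        have hlt := hy.2.2
        by_cases hq : y.1 = x.1
        · have hw2 : wl y.1 x.1 = 2 := if_pos hq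
          have p1 := hpar x hx
          have p2 := hpar y hy.1
          rw [hq] at p2
          omega
        · have hw2 : wl y.1 x.1 = 1 := if_neg hq
          omega
      · rcases Nat.eq_zero_or_pos x.2 with h0 | h1
        · omega
        · rcases hA.2.2 x hx h1 with h | h | h
          · have h5 := le_hgt (w := wl) (x := x) h
              (by simp only; rw [abs_le]; omega) (by simp only; omega)
            rw [IH (x.2 - 1) (by omega) _ h rfl] at h5
            have hw2 : wl (x.1 - 1) x.1 = 1 := if_neg (by omega)
            rw [hw2] at h5
            simp only at h5; omega
          · have h5 := le_hgt (w := wl) (x := x) h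
              (by simp only; rw [abs_le]; omega) (by simp only; omega)
            rw [IH (x.2 - 1) (by omega) _ h rfl] at h5
            have hw2 : wl (x.1 + 1) x.1 = 1 := if_neg (by omega)
            rw [hw2] at h5
            simp only at h5; omega
          · have h5 := le_hgt (w := wl) (x := x) h.2
              (by simp only; rw [abs_le]; omega) (by simp only; omega)
            rw [IH (x.2 - 2) (by omega) _ h.2 rfl] at h5
            have hw2 : wl x.1 x.1 = 2 := if_pos rfl
            rw [hw2] at h5
            simp only at h5; omega
  exact fun x hx => main x.2 x hx rfl

def Phi (A : Finset Pc) : Finset Pc := nrm w1 A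
def Psi (K : Finset Pc) : Finset Pc := nrm wl K

lemma Psi_isAnimal {S : Finset ℤ} {K : Finset Pc} (hK : IsHeap K) (hlev : lev0 K = S) :
    IsTriAnimal Set.univ S (Psi K) := by
  refine ⟨fun _ _ => Set.mem_univ _, ?_, ?_⟩
  · intro q
    constructor
    · intro hq
      simp only [Psi, nrm, Finset.mem_image] at hq
      obtain ⟨x, hx, heq⟩ := hq
      rw [Prod.mk.injEq] at heq
      have hx2 : x.2 = 0 := by
        by_contra h
        have := heap_hgt_pos wl_pos hK hx (by omega)
        omega
      have : (q, 0) ∈ K := by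
        rw [← heq.1, ← hx2]; exact hx
      rw [← hlev]
      exact mem_lev0.mpr this
    · intro hq
      rw [← hlev] at hq
      have h1 : (q, 0) ∈ K := mem_lev0.mp hq
      simp only [Psi, nrm, Finset.mem_image]
      exact ⟨(q, 0), h1, by rw [hgt_of_rank_zero wl K (q, 0) rfl]⟩
  · intro z hz h1
    simp only [Psi, nrm, Finset.mem_image] at hz
    obtain ⟨x, hx, heq⟩ := hz
    have h1' : 1 ≤ hgt wl K x := by rw [← heq] at h1; exact h1
    obtain ⟨y, hy, hcf, hrk, hval⟩ := hgt_exists h1'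
    by_cases hq : y.1 = x.1
    · right; right
      have hw2 : wl y.1 x.1 = 2 := if_pos hq
      rw [hw2] at hval
      constructor
      · rw [← heq]; simp only; omega
      · have : (z.1, z.2 - 2) = (y.1, hgt wl K y) := by
          rw [Prod.mk.injEq, ← heq]
          exact ⟨hq.symm, by simp only; omega⟩
        rw [this]
        exact Finset.mem_image_of_mem _ hy
    · have hw2 : wl y.1 x.1 = 1 := if_neg hq
      rw [hw2] at hval
      rw [abs_le] at hcf
      rcases show y.1 = x.1 - 1 ∨ y.1 = x.1 + 1 by omega with hc | hc
      · left
        have : (z.1 - 1, z.2 - 1) = (y.1, hgt wl K y) := by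
          rw [Prod.mk.injEq, ← heq]
          exact ⟨by simp only; omega, by simp only; omega⟩
        rw [this]
        exact Finset.mem_image_of_mem _ hy
      · right; left
        have : (z.1 + 1, z.2 - 1) = (y.1, hgt wl K y) := by
          rw [Prod.mk.injEq, ← heq]
          exact ⟨by simp only; omega, by simp only; omega⟩
        rw [this]
        exact Finset.mem_image_of_mem _ hy

lemma Phi_isHeap {A : Finset Pc} (hAdm : Adm A) : IsHeap (Phi A) := nrm_isHeap hAdm

lemma lev0_Phi {S : Finset ℤ} {A : Finset Pc} (hA : IsTriAnimal Set.univ S A) :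
    lev0 (Phi A) = S := by
  ext q
  rw [mem_lev0]
  simp only [Phi, nrm, Finset.mem_image]
  constructor
  · rintro ⟨x, hx, heq⟩
    rw [Prod.mk.injEq] at heq
    have hx2 : x.2 = 0 := by
      by_contra h
      have := animal_hgt_pos w1_pos hA hx (by omega)
      omega
    have : (q, 0) ∈ A := by rw [← heq.1, ← hx2]; exact hx
    exact (hA.2.1 q).mp this
  · intro hq
    have h1 : (q, 0) ∈ A := (hA.2.1 q).mpr hq
    exact ⟨(q, 0), h1, by rw [hgt_of_rank_zero w1 A (q, 0) rfl]⟩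

lemma Psi_Phi {S : Finset ℤ} {A : Finset Pc} {ε : ℤ} (hA : IsTriAnimal Set.univ S A)
    (hpar : ∀ x ∈ A, (x.1 + x.2) % 2 = ε) : Psi (Phi A) = A := by
  have hAdm : Adm A := animal_adm hpar
  have hL2 := hgt_animal hA hpar
  have htr := hgt_image wl A (fun x => (x.1, hgt w1 A x)) (fun x _ => rfl)
    (by
      intro x hx y hy hcf
      have hcf' : |x.1 - y.1| ≤ 1 := by rw [abs_sub_comm]; exact hcf
      exact hgt_lt_iff w1_pos hAdm hx hy hcf')
  unfold Psi Phi nrm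
  rw [Finset.image_image]
  have heq : ∀ x ∈ A, ((fun z => (z.1, hgt wl (A.image fun x => (x.1, hgt w1 A x)) z)) ∘
      (fun x => (x.1, hgt w1 A x))) x = id x := by
    intro x hx
    simp only [Function.comp_apply, id_eq]
    refine Prod.ext rfl ?_
    simp only
    rw [htr x hx]
    exact hL2 x hx
  rw [Finset.image_congr heq, Finset.image_id]

lemma Phi_Psi {K : Finset Pc} (hK : IsHeap K) : Phi (Psi K) = K := by
  have hN2 := hgt_heap hK
  have htr := hgt_image w1 K (fun x => (x.1, hgt wl K x)) (fun x _ => rfl)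
    (by
      intro x hx y hy hcf
      have hcf' : |x.1 - y.1| ≤ 1 := by rw [abs_sub_comm]; exact hcf
      exact hgt_lt_iff wl_pos hK.1 hx hy hcf')
  unfold Psi Phi nrm
  rw [Finset.image_image]
  have heq : ∀ x ∈ K, ((fun z => (z.1, hgt w1 (K.image fun x => (x.1, hgt wl K x)) z)) ∘
      (fun x => (x.1, hgt wl K x))) x = id x := by
    intro x hx
    simp only [Function.comp_apply, id_eq]
    refine Prod.ext rfl ?_
    simp only
    rw [htr x hx]
    exact hN2 x hx
  rw [Finset.image_congr heq, Finset.image_id]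

def tset (T : Finset ℤ) : Finset Pc := T.image fun q => ((q, 0) : Pc)
def shup (H : Finset Pc) : Finset Pc := H.image fun x => (x.1, x.2 + 1)
def dn (K : Finset Pc) : Finset Pc := (K.filter fun x => 1 ≤ x.2).image fun x => (x.1, x.2 - 1)
def up (S : Finset ℤ) (H : Finset Pc) : Finset Pc := tset S ∪ shup H

lemma mem_tset {T : Finset ℤ} {z : Pc} : z ∈ tset T ↔ z.2 = 0 ∧ z.1 ∈ T := by
  simp only [tset, Finset.mem_image]
  constructor
  · rintro ⟨q, hq, rfl⟩; exact ⟨rfl, hq⟩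
  · rintro ⟨h0, h1⟩; exact ⟨z.1, h1, by rw [← h0]⟩

lemma mem_shup {H : Finset Pc} {z : Pc} : z ∈ shup H ↔ 1 ≤ z.2 ∧ (z.1, z.2 - 1) ∈ H := by
  simp only [shup, Finset.mem_image]
  constructor
  · rintro ⟨x, hx, rfl⟩
    exact ⟨by omega, by simpa using hx⟩
  · rintro ⟨h1, h2⟩
    exact ⟨(z.1, z.2 - 1), h2, by simp only; exact Prod.ext rfl (by omega)⟩

lemma card_tset (T : Finset ℤ) : (tset T).card = T.card :=
  Finset.card_image_of_injective _ (fun a b h => congrArg Prod.fst h)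

lemma card_shup (H : Finset Pc) : (shup H).card = H.card := by
  rw [shup]
  apply Finset.card_image_of_injective
  intro a b h
  rw [Prod.mk.injEq] at h
  exact Prod.ext h.1 (by omega)

lemma up_isHeap {S : Finset ℤ} {ε : ℤ} (hal : ∀ s ∈ S, s % 2 = ε) {H : Finset Pc}
    (hH : IsHeap H) (hlev : lev0 H ⊆ vnbr S) : IsHeap (up S H) := by
  constructor
  · intro x hx y hy hne hcf heq
    rw [up, Finset.mem_union] at hx hy
    rcases hx with hx | hx <;> rcases hy with hy | hy
    · rw [mem_tset] at hx hy
      have p1 := hal x.1 hx.2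
      have p2 := hal y.1 hy.2
      rw [abs_le] at hcf
      have h1 : x.1 = y.1 := by omega
      exact hne (Prod.ext h1 (by omega))
    · rw [mem_tset] at hx; rw [mem_shup] at hy; omega
    · rw [mem_shup] at hx; rw [mem_tset] at hy; omega
    · rw [mem_shup] at hx; rw [mem_shup] at hy
      have hne' : ((x.1, x.2 - 1) : Pc) ≠ (y.1, y.2 - 1) := by
        intro h
        rw [Prod.mk.injEq] at h
        exact hne (Prod.ext h.1 (by omega))
      have := hH.1 _ hx.2 _ hy.2 hne' (by simpa using hcf)
      simp only at this; omega
  · intro x hx h1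
    rw [up, Finset.mem_union] at hx
    rcases hx with hx | hx
    · rw [mem_tset] at hx; omega
    · rw [mem_shup] at hx
      rcases Nat.lt_or_ge 1 x.2 with h2 | h2
      · obtain ⟨y, hy, hcf, hrk⟩ := hH.2 (x.1, x.2 - 1) hx.2 (by simp only; omega)
        refine ⟨(y.1, y.2 + 1), ?_, ?_, ?_⟩
        · exact Finset.mem_union_right _ (Finset.mem_image_of_mem _ hy)
        · simpa using hcf
        · simp only at hrk ⊢; omega
      · have hx2 : x.2 = 1 := by omega
        have h0 : (x.1, (0 : ℕ)) ∈ H := by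
          have := hx.2; rwa [show x.2 - 1 = 0 by omega] at this
        have : x.1 ∈ vnbr S := hlev (mem_lev0.mpr h0)
        obtain ⟨s, hs, hd⟩ := mem_vnbr.mp this
        refine ⟨(s, 0), Finset.mem_union_left _ (mem_tset.mpr ⟨rfl, hs⟩), ?_, by simp only; omega⟩
        simp only; rw [abs_sub_comm]; exact hd

lemma lev0_up {S : Finset ℤ} {H : Finset Pc} : lev0 (up S H) = S := by
  ext q
  rw [mem_lev0, up, Finset.mem_union, mem_tset, mem_shup]
  simp

lemma card_up {S : Finset ℤ} {H : Finset Pc} : (up S H).card = S.card + H.card := by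
  rw [up, Finset.card_union_of_disjoint, card_tset, card_shup]
  rw [Finset.disjoint_left]
  intro z hz hz'
  rw [mem_tset] at hz; rw [mem_shup] at hz'; omega

lemma dn_up {S : Finset ℤ} {H : Finset Pc} : dn (up S H) = H := by
  rw [dn]
  have h1 : (up S H).filter (fun x => 1 ≤ x.2) = shup H := by
    ext z
    rw [Finset.mem_filter, up, Finset.mem_union, mem_tset, mem_shup]
    constructor
    · rintro ⟨h | h, h2⟩
      · omega
      · exact h
    · intro h; exact ⟨Or.inr h, h.1⟩
  rw [h1, shup, Finset.image_image]
  have : ∀ x ∈ H, ((fun x : Pc => (x.1, x.2 - 1)) ∘ (fun x : Pc => (x.1, x.2 + 1))) x = id x := by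
    intro x hx
    simp only [Function.comp_apply, id_eq]
    exact Prod.ext rfl (by omega)
  rw [Finset.image_congr this, Finset.image_id]

lemma dn_isHeap {K : Finset Pc} (hK : IsHeap K) : IsHeap (dn K) := by
  constructor
  · intro x hx y hy hne hcf heq
    rw [dn, Finset.mem_image] at hx hy
    obtain ⟨a, ha, rfl⟩ := hx
    obtain ⟨b, hb, rfl⟩ := hy
    rw [Finset.mem_filter] at ha hb
    have hne' : a ≠ b := by rintro rfl; exact hne rfl
    have := hK.1 a ha.1 b hb.1 hne' (by simpa using hcf)
    simp only at heq; omega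
  · intro z hz h1
    rw [dn, Finset.mem_image] at hz
    obtain ⟨a, ha, rfl⟩ := hz
    rw [Finset.mem_filter] at ha
    simp only at h1
    obtain ⟨y, hy, hcf, hrk⟩ := hK.2 a ha.1 (by omega)
    refine ⟨(y.1, y.2 - 1), ?_, by simpa using hcf, by simp only; omega⟩
    rw [dn, Finset.mem_image]
    exact ⟨y, Finset.mem_filter.mpr ⟨hy, by omega⟩, rfl⟩

lemma lev0_dn {K : Finset Pc} {S : Finset ℤ} (hK : IsHeap K) (hlev : lev0 K = S) :
    lev0 (dn K) ⊆ vnbr S := by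
  intro q hq
  rw [mem_lev0, dn, Finset.mem_image] at hq
  obtain ⟨a, ha, heq⟩ := hq
  rw [Finset.mem_filter] at ha
  rw [Prod.mk.injEq] at heq
  obtain ⟨y, hy, hcf, hrk⟩ := hK.2 a ha.1 ha.2
  have hy0 : y.2 = 0 := by omega
  have : y.1 ∈ S := by
    rw [← hlev]
    apply mem_lev0.mpr
    rw [show ((y.1, 0) : Pc) = y from Prod.ext rfl hy0.symm]
    exact hy
  apply mem_vnbr.mpr
  refine ⟨y.1, this, ?_⟩
  rw [abs_le] at hcf ⊢; omega

lemma filter_rank0 {K : Finset Pc} {S : Finset ℤ} (hlev : lev0 K = S) :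
    K.filter (fun x => x.2 = 0) = tset S := by
  ext z
  rw [Finset.mem_filter, mem_tset]
  constructor
  · rintro ⟨hz, h0⟩
    refine ⟨h0, ?_⟩
    rw [← hlev]
    apply mem_lev0.mpr
    rw [show ((z.1, 0) : Pc) = z from Prod.ext rfl h0.symm]
    exact hz
  · rintro ⟨h0, h1⟩
    rw [← hlev] at h1
    have := mem_lev0.mp h1
    rw [show z = ((z.1, 0) : Pc) from Prod.ext rfl h0]
    exact ⟨this, rfl⟩

lemma card_dn {K : Finset Pc} {S : Finset ℤ} (hlev : lev0 K = S) :
    (dn K).card + S.card = K.card := by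
  have hinj : Set.InjOn (fun x : Pc => (x.1, x.2 - 1)) (K.filter fun x => 1 ≤ x.2) := by
    intro a ha b hb h
    rw [Finset.coe_filter, Set.mem_setOf_eq] at ha hb
    rw [Prod.mk.injEq] at h
    exact Prod.ext h.1 (by omega)
  rw [dn, Finset.card_image_of_injOn hinj]
  have := Finset.card_filter_add_card_filter_not (s := K) (p := fun x => x.2 = 0)
  rw [filter_rank0 hlev, card_tset] at this
  have heq : K.filter (fun x => ¬ x.2 = 0) = K.filter (fun x => 1 ≤ x.2) := by
    apply Finset.filter_congr; intro x _; omega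
  rw [heq] at this
  omega

lemma up_dn {K : Finset Pc} {S : Finset ℤ} (hlev : lev0 K = S) : up S (dn K) = K := by
  rw [up, dn, shup, Finset.image_image]
  have h2 : ∀ x ∈ K.filter (fun x => 1 ≤ x.2),
      ((fun x : Pc => (x.1, x.2 + 1)) ∘ (fun x : Pc => (x.1, x.2 - 1))) x = id x := by
    intro x hx
    rw [Finset.mem_filter] at hx
    simp only [Function.comp_apply, id_eq]
    exact Prod.ext rfl (by omega)
  rw [Finset.image_congr h2, Finset.image_id, ← filter_rank0 hlev]
  conv_rhs => rw [← Finset.filter_union_filter_not_eq (p := fun x => x.2 = 0) K]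
  congr 1
  apply Finset.filter_congr; intro x _; omega

def heapSet (M : Finset ℤ) (j : ℕ) : Set (Finset Pc) :=
  {H | IsHeap H ∧ lev0 H ⊆ M ∧ H.card = j}

lemma ncard_bij {α β : Type*} (s : Set α) (t : Set β) (f : α → β) (g : β → α)
    (hf : ∀ a ∈ s, f a ∈ t) (hg : ∀ b ∈ t, g b ∈ s) (hgf : ∀ a ∈ s, g (f a) = a)
    (hfg : ∀ b ∈ t, f (g b) = b) : s.ncard = t.ncard := by
  have himg : f '' s = t := by
    apply Set.eq_of_subset_of_subset
    · rintro b ⟨a, ha, rfl⟩; exact hf a ha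
    · intro b hb; exact ⟨g b, hg b hb, hfg b hb⟩
  rw [← himg]
  exact (Set.ncard_image_of_injOn (fun a ha a' ha' h => by
    rw [← hgf a ha, h, hgf a' ha'])).symm

lemma triCount_eq {S : Finset ℤ} {ε : ℤ} (hal : ∀ s ∈ S, s % 2 = ε) (n : ℕ) :
    triCount Set.univ S n =
      if S.card ≤ n then (heapSet (vnbr S) (n - S.card)).ncard else 0 := by
  unfold triCount
  split_ifs with hn
  · have step1 : {A : Finset (ℤ × ℕ) | IsTriAnimal Set.univ S A ∧ A.card = n}.ncard
        = {K : Finset Pc | IsHeap K ∧ lev0 K = S ∧ K.card = n}.ncard := by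
      apply ncard_bij _ _ Phi Psi
      · rintro A ⟨hA, hcard⟩
        have hpar := animal_parity hA hal
        have hAdm : Adm A := animal_adm hpar
        exact ⟨Phi_isHeap hAdm, lev0_Phi hA, by rw [Phi, nrm_card w1_pos hAdm, hcard]⟩
      · rintro K ⟨hK, hlev, hcard⟩
        exact ⟨Psi_isAnimal hK hlev, by rw [Psi, nrm_card wl_pos hK.1, hcard]⟩
      · rintro A ⟨hA, hcard⟩
        exact Psi_Phi hA (animal_parity hA hal)
      · rintro K ⟨hK, hlev, hcard⟩
        exact Phi_Psi hK
    rw [step1]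
    apply ncard_bij _ _ dn (up S)
    · rintro K ⟨hK, hlev, hcard⟩
      refine ⟨dn_isHeap hK, lev0_dn hK hlev, ?_⟩
      have := card_dn hlev
      omega
    · rintro H ⟨hH, hlev, hcard⟩
      refine ⟨up_isHeap hal hH hlev, lev0_up, ?_⟩
      rw [card_up, hcard]
      omega
    · rintro K ⟨hK, hlev, hcard⟩
      exact up_dn hlev
    · rintro H ⟨hH, hlev, hcard⟩
      exact dn_up
  · rw [show {A : Finset (ℤ × ℕ) | IsTriAnimal Set.univ S A ∧ A.card = n} = ∅ from ?_]
    · exact Set.ncard_empty _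
    · apply Set.eq_empty_iff_forall_notMem.mpr
      rintro A ⟨hA, hcard⟩
      have hsub : tset S ⊆ A := by
        intro z hz
        rw [mem_tset] at hz
        have := (hA.2.1 z.1).mpr hz.2
        rwa [show ((z.1, 0) : Pc) = z from Prod.ext rfl hz.1.symm] at this
      have := Finset.card_le_card hsub
      rw [card_tset, hcard] at this
      omega

lemma heap_exists_rank {K : Finset Pc} (hK : IsHeap K) :
    ∀ x ∈ K, ∀ r, r ≤ x.2 → ∃ y ∈ K, y.2 = r := by
  have main : ∀ n, ∀ x ∈ K, x.2 = n → ∀ r, r ≤ x.2 → ∃ y ∈ K, y.2 = r := by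
    intro n
    induction n using Nat.strong_induction_on with
    | _ n IH =>
      intro x hx hxn r hr
      rcases eq_or_lt_of_le hr with he | hl
      · exact ⟨x, hx, he.symm⟩
      · obtain ⟨y, hy, _, hrk⟩ := hK.2 x hx (by omega)
        exact IH y.2 (by omega) y hy rfl r (by omega)
  exact fun x hx => main x.2 x hx rfl

lemma heap_rank_lt {K : Finset Pc} (hK : IsHeap K) {x : Pc} (hx : x ∈ K) : x.2 < K.card := by
  have hsub : Finset.range (x.2 + 1) ⊆ K.image Prod.snd := by
    intro r hr
    rw [Finset.mem_range] at hr
    obtain ⟨y, hy, hyr⟩ := heap_exists_rank hK x hx r (by omega)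
    exact Finset.mem_image.mpr ⟨y, hy, hyr⟩
  have h1 := Finset.card_le_card hsub
  have h2 := Finset.card_image_le (s := K) (f := Prod.snd)
  rw [Finset.card_range] at h1
  omega

lemma heap_pos_bound {K : Finset Pc} {M : Finset ℤ} (hK : IsHeap K) (hlev : lev0 K ⊆ M)
    (hM : M.Nonempty) : ∀ x ∈ K, M.min' hM - x.2 ≤ x.1 ∧ x.1 ≤ M.max' hM + x.2 := by
  have main : ∀ n, ∀ x ∈ K, x.2 = n → M.min' hM - x.2 ≤ x.1 ∧ x.1 ≤ M.max' hM + x.2 := by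
    intro n
    induction n using Nat.strong_induction_on with
    | _ n IH =>
      intro x hx hxn
      rcases Nat.eq_zero_or_pos x.2 with h0 | h1
      · have hx' : x.1 ∈ M := hlev (mem_lev0.mpr (by
          rwa [show ((x.1, 0) : Pc) = x from Prod.ext rfl h0.symm]))
        have := M.min'_le x.1 hx'
        have := M.le_max' x.1 hx'
        omega
      · obtain ⟨y, hy, hcf, hrk⟩ := hK.2 x hx h1
        have := IH y.2 (by omega) y hy rfl
        rw [abs_le] at hcf
        omega
  exact fun x hx => main x.2 x hx rfl

lemma heap_lev0_nonempty {K : Finset Pc} (hK : IsHeap K) (hne : K.Nonempty) :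
    (lev0 K).Nonempty := by
  obtain ⟨x, hx, hmin⟩ := K.exists_min_image Prod.snd hne
  rcases Nat.eq_zero_or_pos x.2 with h0 | h1
  · exact ⟨x.1, mem_lev0.mpr (by rwa [show ((x.1, 0) : Pc) = x from Prod.ext rfl h0.symm])⟩
  · obtain ⟨y, hy, _, hrk⟩ := hK.2 x hx h1
    have := hmin y hy
    omega

lemma heapSet_finite (M : Finset ℤ) (j : ℕ) : (heapSet M j).Finite := by
  rcases M.eq_empty_or_nonempty with hM | hM
  · apply Set.Finite.subset (Set.finite_singleton (∅ : Finset Pc))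
    rintro K ⟨hK, hlev, _⟩
    rcases K.eq_empty_or_nonempty with rfl | hne
    · exact Set.mem_singleton _
    · exfalso
      obtain ⟨q, hq⟩ := heap_lev0_nonempty hK hne
      have := hlev hq
      rw [hM] at this
      exact absurd this (Finset.notMem_empty q)
  · apply Set.Finite.subset
      (Finset.finite_toSet ((Finset.Icc (M.min' hM - j) (M.max' hM + j) ×ˢ Finset.range j).powerset))
    rintro K ⟨hK, hlev, hcard⟩
    simp only [Finset.coe_powerset, Set.mem_preimage, Set.mem_powerset_iff, Finset.coe_subset,
      Finset.mem_coe]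
    intro x hx
    have hb := heap_pos_bound hK hlev hM x hx
    have hr := heap_rank_lt hK hx
    rw [Finset.mem_product, Finset.mem_Icc, Finset.mem_range]
    constructor
    · omega
    · omega

def Ind (T : Finset ℤ) : Prop := ∀ a ∈ T, ∀ b ∈ T, a ≠ b → 2 ≤ |a - b|

def push (T : Finset ℤ) (H : Finset Pc) : Finset Pc := nrm w1 (tset T ∪ shup H)
def popm (T : Finset ℤ) (K : Finset Pc) : Finset Pc := nrm w1 (K \ tset T)

lemma adm_pushF {T : Finset ℤ} {H : Finset Pc} (hT : Ind T) (hH : IsHeap H) :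
    Adm (tset T ∪ shup H) := by
  intro x hx y hy hne hcf heq
  rw [Finset.mem_union] at hx hy
  rcases hx with hx | hx <;> rcases hy with hy | hy
  · rw [mem_tset] at hx hy
    have h1 : x.1 ≠ y.1 := by
      intro h
      exact hne (Prod.ext h (by omega))
    have := hT x.1 hx.2 y.1 hy.2 h1
    omega
  · rw [mem_tset] at hx; rw [mem_shup] at hy; omega
  · rw [mem_shup] at hx; rw [mem_tset] at hy; omega
  · rw [mem_shup] at hx; rw [mem_shup] at hy
    have hne' : ((x.1, x.2 - 1) : Pc) ≠ (y.1, y.2 - 1) := by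
      intro h
      rw [Prod.mk.injEq] at h
      exact hne (Prod.ext h.1 (by omega))
    have := hH.1 _ hx.2 _ hy.2 hne' (by simpa using hcf)
    simp only at this; omega

lemma hgt_pushF_pos {T : Finset ℤ} {H : Finset Pc} (hH : IsHeap H) {x : Pc} (hx : x ∈ H)
    (h : 1 ≤ x.2 ∨ x.1 ∈ vnbr T) :
    1 ≤ hgt w1 (tset T ∪ shup H) (x.1, x.2 + 1) := by
  rcases h with h | h
  · obtain ⟨y, hy, hcf, hrk⟩ := hH.2 x hx h
    have := le_hgt (w := w1) (F := tset T ∪ shup H) (x := ((x.1, x.2 + 1) : Pc))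
      (y := (y.1, y.2 + 1))
      (Finset.mem_union_right _ (Finset.mem_image_of_mem (fun x : Pc => (x.1, x.2 + 1)) hy))
      (by simpa using hcf) (by simp only; omega)
    have h3 : w1 ((y.1, y.2 + 1) : Pc).1 ((x.1, x.2 + 1) : Pc).1 = 1 := rfl
    omega
  · obtain ⟨p, hp, hd⟩ := mem_vnbr.mp h
    have := le_hgt (w := w1) (F := tset T ∪ shup H) (x := ((x.1, x.2 + 1) : Pc)) (y := (p, 0))
      (Finset.mem_union_left _ (mem_tset.mpr ⟨rfl, hp⟩))
      (by simp only; rw [abs_sub_comm]; exact hd) (by simp only; omega)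
    have h3 : w1 ((p, 0) : Pc).1 ((x.1, x.2 + 1) : Pc).1 = 1 := rfl
    omega

lemma tset_subset_push {T : Finset ℤ} {H : Finset Pc} : tset T ⊆ push T H := by
  intro z hz
  have h0 : z.2 = 0 := (mem_tset.mp hz).1
  have : z ∈ tset T ∪ shup H := Finset.mem_union_left _ hz
  have hm : ((z.1, hgt w1 (tset T ∪ shup H) z) : Pc) ∈ push T H :=
    Finset.mem_image_of_mem _ this
  rw [hgt_of_rank_zero _ _ _ h0] at hm
  rwa [show ((z.1, 0) : Pc) = z from Prod.ext rfl h0.symm] at hm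

lemma push_isHeap {T : Finset ℤ} {H : Finset Pc} (hT : Ind T) (hH : IsHeap H) :
    IsHeap (push T H) := nrm_isHeap (adm_pushF hT hH)

lemma card_push {T : Finset ℤ} {H : Finset Pc} (hT : Ind T) (hH : IsHeap H) :
    (push T H).card = T.card + H.card := by
  rw [push, nrm_card w1_pos (adm_pushF hT hH), Finset.card_union_of_disjoint, card_tset, card_shup]
  rw [Finset.disjoint_left]
  intro z hz hz'
  rw [mem_tset] at hz; rw [mem_shup] at hz'; omega

lemma lev0_push {T : Finset ℤ} {H : Finset Pc} (hH : IsHeap H) :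
    lev0 (push T H) ⊆ T ∪ lev0 H := by
  intro q hq
  rw [mem_lev0, push, nrm, Finset.mem_image] at hq
  obtain ⟨z, hz, heq⟩ := hq
  rw [Prod.mk.injEq] at heq
  rw [Finset.mem_union] at hz
  rcases hz with hz | hz
  · rw [mem_tset] at hz
    exact Finset.mem_union_left _ (by rw [← heq.1]; exact hz.2)
  · rw [mem_shup] at hz
    have hx := hz.2
    have hz2 : z.2 - 1 = 0 := by
      by_contra hne
      have := hgt_pushF_pos (T := T) hH hx (Or.inl (by simp only; omega))
      have hzz : ((z.1, z.2 - 1 + 1) : Pc) = z := Prod.ext rfl (by omega)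
      rw [hzz] at this
      omega
    apply Finset.mem_union_right
    rw [mem_lev0, ← heq.1]
    rw [← hz2]
    exact hx

lemma popm_isHeap {T : Finset ℤ} {K : Finset Pc} (hK : IsHeap K) : IsHeap (popm T K) :=
  nrm_isHeap (hK.1.subset (Finset.sdiff_subset))

lemma card_popm {T : Finset ℤ} {K : Finset Pc} (hK : IsHeap K) (hsub : tset T ⊆ K) :
    (popm T K).card + T.card = K.card := by
  rw [popm, nrm_card w1_pos (hK.1.subset (Finset.sdiff_subset)), Finset.card_sdiff_of_subset hsub,
    card_tset]
  have := Finset.card_le_card hsub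
  rw [card_tset] at this
  omega

lemma lev0_popm {T : Finset ℤ} {K : Finset Pc} (hK : IsHeap K) :
    lev0 (popm T K) ⊆ lev0 K ∪ vnbr T := by
  intro q hq
  rw [mem_lev0, popm, nrm, Finset.mem_image] at hq
  obtain ⟨z, hz, heq⟩ := hq
  rw [Prod.mk.injEq] at heq
  have hzK := (Finset.mem_sdiff.mp hz).1
  have hzT := (Finset.mem_sdiff.mp hz).2
  rcases Nat.eq_zero_or_pos z.2 with h0 | h1
  · apply Finset.mem_union_left
    rw [mem_lev0, ← heq.1, ← h0]
    exact hzK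
  · obtain ⟨y, hy, hcf, hrk⟩ := hK.2 z hzK h1
    by_cases hyG : y ∈ K \ tset T
    · exfalso
      have := le_hgt (w := w1) hyG hcf (by omega)
      have h3 : w1 y.1 z.1 = 1 := rfl
      omega
    · have hyT : y ∈ tset T := by
        by_contra hnot
        exact hyG (Finset.mem_sdiff.mpr ⟨hy, hnot⟩)
      rw [mem_tset] at hyT
      apply Finset.mem_union_right
      apply mem_vnbr.mpr
      refine ⟨y.1, hyT.2, ?_⟩
      rw [← heq.1, abs_sub_comm]
      exact hcf

lemma pop_push {T : Finset ℤ} {H : Finset Pc} (hT : Ind T) (hH : IsHeap H) :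
    popm T (push T H) = H := by
  set Fb := tset T ∪ shup H with hFb
  have hAdm : Adm Fb := adm_pushF hT hH
  set φ : Pc → Pc := fun x => (x.1, hgt w1 Fb (x.1, x.2 + 1)) with hφ
  have hstepa : push T H = tset T ∪ H.image φ := by
    rw [push, ← hFb, nrm, Finset.image_union]
    congr 1
    · have h1 : ∀ z ∈ tset T, (fun x => (x.1, hgt w1 Fb x)) z = id z := by
        intro z hz
        simp only [id_eq]
        refine Prod.ext rfl ?_
        simp only
        rw [hgt_of_rank_zero w1 Fb z (mem_tset.mp hz).1]
        exact ((mem_tset.mp hz).1).symm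
      rw [Finset.image_congr h1, Finset.image_id]
    · rw [shup, Finset.image_image]
      rfl
  have hdisj : Disjoint (tset T) (H.image φ) := by
    rw [Finset.disjoint_left]
    intro z hz hz'
    rw [mem_tset] at hz
    rw [Finset.mem_image] at hz'
    obtain ⟨x, hx, heq⟩ := hz'
    simp only [hφ] at heq
    have hx1 : x.1 = z.1 := by rw [← heq]
    have h1 : 1 ≤ hgt w1 Fb (x.1, x.2 + 1) :=
      hgt_pushF_pos hH hx (Or.inr (mem_vnbr.mpr ⟨x.1, by rw [hx1]; exact hz.2, by simp⟩))
    have h2 : hgt w1 Fb (x.1, x.2 + 1) = z.2 := by rw [← heq]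
    omega
  have hstepb : push T H \ tset T = H.image φ := by
    rw [hstepa, Finset.union_sdiff_cancel_left hdisj]
  have hordF : ∀ x ∈ H, ∀ y ∈ H, |y.1 - x.1| ≤ 1 → (y.2 < x.2 ↔ (φ y).2 < (φ x).2) := by
    intro x hx y hy hcf
    have hx' : ((x.1, x.2 + 1) : Pc) ∈ Fb :=
      Finset.mem_union_right _ (Finset.mem_image_of_mem (fun x : Pc => (x.1, x.2 + 1)) hx)
    have hy' : ((y.1, y.2 + 1) : Pc) ∈ Fb :=
      Finset.mem_union_right _ (Finset.mem_image_of_mem (fun x : Pc => (x.1, x.2 + 1)) hy)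
    have hiff := hgt_lt_iff w1_pos hAdm hx' hy' (by rw [abs_sub_comm]; simpa using hcf)
    simp only [hφ]
    constructor
    · intro h
      exact hiff.mp (by simp only; omega)
    · intro h
      have := hiff.mpr h
      simp only at this; omega
  have htr := hgt_image w1 H φ (fun x _ => rfl) hordF
  rw [popm, hstepb, nrm, Finset.image_image]
  have hfin : ∀ x ∈ H, ((fun z => (z.1, hgt w1 (H.image φ) z)) ∘ φ) x = id x := by
    intro x hx
    simp only [Function.comp_apply, id_eq]
    refine Prod.ext rfl ?_
    simp only
    rw [htr x hx]
    exact hgt_heap hH x hx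
  rw [Finset.image_congr hfin, Finset.image_id]

lemma ind_of_tset_subset {T : Finset ℤ} {K : Finset Pc} (hK : IsHeap K) (hsub : tset T ⊆ K) :
    Ind T := by
  intro a ha b hb hne
  by_contra hlt
  have h1 : ((a, 0) : Pc) ∈ K := hsub (mem_tset.mpr ⟨rfl, ha⟩)
  have h2 : ((b, 0) : Pc) ∈ K := hsub (mem_tset.mpr ⟨rfl, hb⟩)
  have hne' : ((a, 0) : Pc) ≠ (b, 0) := by
    intro h
    exact hne (congrArg Prod.fst h)
  exact hK.1 _ h1 _ h2 hne' (by simp only; omega) rfl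

lemma push_pop {T : Finset ℤ} {K : Finset Pc} (hK : IsHeap K) (hsub : tset T ⊆ K) :
    push T (popm T K) = K := by
  have hT : Ind T := ind_of_tset_subset hK hsub
  set G := K \ tset T with hG
  have hAdmG : Adm G := hK.1.subset Finset.sdiff_subset
  set ψ : Pc → Pc := fun z => if z.2 = 0 ∧ z.1 ∈ T then z else (z.1, hgt w1 G z + 1) with hψ
  have hψ1 : ∀ z : Pc, (ψ z).1 = z.1 := by
    intro z; simp only [hψ]; split <;> rfl
  have hmemG : ∀ z ∈ K, ¬(z.2 = 0 ∧ z.1 ∈ T) → z ∈ G := by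
    intro z hz hc
    refine Finset.mem_sdiff.mpr ⟨hz, ?_⟩
    intro hmem
    exact hc ⟨(mem_tset.mp hmem).1, (mem_tset.mp hmem).2⟩
  have hstepa : K.image ψ = tset T ∪ shup (popm T K) := by
    conv_lhs => rw [← Finset.union_sdiff_of_subset hsub]
    rw [Finset.image_union]
    congr 1
    · have h1 : ∀ z ∈ tset T, ψ z = id z := by
        intro z hz
        rw [mem_tset] at hz
        simp only [hψ, id_eq, if_pos (And.intro hz.1 hz.2)]
      rw [Finset.image_congr h1, Finset.image_id]
    · rw [popm, ← hG, shup, nrm, Finset.image_image]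
      apply Finset.image_congr
      intro z hz
      have hc : ¬(z.2 = 0 ∧ z.1 ∈ T) := by
        intro hc
        exact (Finset.mem_sdiff.mp hz).2 (mem_tset.mpr ⟨hc.1, hc.2⟩)
      simp only [hψ, Function.comp_apply, if_neg hc]
  have hordK : ∀ x ∈ K, ∀ y ∈ K, |y.1 - x.1| ≤ 1 → (y.2 < x.2 ↔ (ψ y).2 < (ψ x).2) := by
    intro x hx y hy hcf
    by_cases cx : x.2 = 0 ∧ x.1 ∈ T <;> by_cases cy : y.2 = 0 ∧ y.1 ∈ T
    · simp only [hψ, if_pos cx, if_pos cy]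
    · have hy2 : 1 ≤ y.2 := by
        rcases Nat.eq_zero_or_pos y.2 with h0 | h1
        · exfalso
          have hne : x ≠ y := by
            intro h; rw [h] at cx; exact cy cx
          exact absurd (hK.1 x hx y hy hne (by rw [abs_sub_comm]; exact hcf)) (by omega)
        · exact h1
      simp only [hψ, if_pos cx, if_neg cy]
      constructor
      · intro hlt; omega
      · intro hlt; omega
    · have hx2 : 1 ≤ x.2 := by
        rcases Nat.eq_zero_or_pos x.2 with h0 | h1
        · exfalso
          have hne : y ≠ x := by
            intro h; rw [h] at cy; exact cx cy
          exact absurd (hK.1 y hy x hx hne hcf) (by omega)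
        · exact h1
      simp only [hψ, if_neg cx, if_pos cy]
      constructor
      · intro hlt; omega
      · intro hlt; omega
    · have hxG : x ∈ G := hmemG x hx cx
      have hyG : y ∈ G := hmemG y hy cy
      have hiff := hgt_lt_iff w1_pos hAdmG hxG hyG (by rw [abs_sub_comm]; exact hcf)
      simp only [hψ, if_neg cx, if_neg cy]
      constructor
      · intro h
        have := hiff.mp h
        omega
      · intro h
        exact hiff.mpr (by omega)
  have htr := hgt_image w1 K ψ (fun z _ => hψ1 z) hordK
  rw [push, ← hstepa, nrm, Finset.image_image]
  have hfin : ∀ z ∈ K, ((fun z' => (z'.1, hgt w1 (K.image ψ) z')) ∘ ψ) z = id z := by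
    intro z hz
    simp only [Function.comp_apply, id_eq]
    refine Prod.ext (hψ1 z) ?_
    simp only
    rw [htr z hz]
    exact hgt_heap hK z hz
  rw [Finset.image_congr hfin, Finset.image_id]

lemma heap_marked {M T : Finset ℤ} (hT : Ind T) (hTM : T ⊆ M) (hvT : vnbr T ⊆ M) (j : ℕ) :
    (heapSet M j).ncard =
      {K : Finset Pc | IsHeap K ∧ lev0 K ⊆ M ∧ K.card = j + T.card ∧ tset T ⊆ K}.ncard := by
  apply ncard_bij _ _ (push T) (popm T)
  · rintro H ⟨hH, hlev, hcard⟩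
    refine ⟨push_isHeap hT hH, ?_, ?_, tset_subset_push⟩
    · intro q hq
      rcases Finset.mem_union.mp (lev0_push hH hq) with h | h
      · exact hTM h
      · exact hlev h
    · rw [card_push hT hH, hcard]; omega
  · rintro K ⟨hK, hlev, hcard, hsub⟩
    refine ⟨popm_isHeap hK, ?_, ?_⟩
    · intro q hq
      rcases Finset.mem_union.mp (lev0_popm hK hq) with h | h
      · exact hlev h
      · exact hvT h
    · have := card_popm hK hsub
      omega
  · rintro H ⟨hH, _, _⟩
    exact pop_push hT hH
  · rintro K ⟨hK, _, _, hsub⟩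
    exact push_pop hK hsub

noncomputable def heapFin (M : Finset ℤ) (j : ℕ) : Finset (Finset Pc) :=
  (heapSet_finite M j).toFinset

lemma mem_heapFin {M : Finset ℤ} {j : ℕ} {K : Finset Pc} :
    K ∈ heapFin M j ↔ IsHeap K ∧ lev0 K ⊆ M ∧ K.card = j :=
  (heapSet_finite M j).mem_toFinset

lemma ncard_heapSet (M : Finset ℤ) (j : ℕ) : (heapSet M j).ncard = (heapFin M j).card := by
  rw [show heapSet M j = ↑(heapFin M j) from ((heapSet_finite M j).coe_toFinset).symm,
    Set.ncard_coe_finset]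

lemma marked_ncard (M T : Finset ℤ) (N : ℕ) :
    {K : Finset Pc | IsHeap K ∧ lev0 K ⊆ M ∧ K.card = N ∧ tset T ⊆ K}.ncard
      = ((heapFin M N).filter fun K => tset T ⊆ K).card := by
  rw [← Set.ncard_coe_finset]
  congr 1
  ext K
  simp only [Finset.coe_filter, Set.mem_setOf_eq, Finset.mem_coe, mem_heapFin]
  tauto

theorem stmt17 (S : Finset ℤ) (hS : S.Nonempty)
    (hal : ∀ a ∈ S, ∀ b ∈ S, a % 2 = b % 2)
    (C : Finset ℤ)
    (hC : C = (Finset.Icc (S.min' hS) (S.max' hS)).filter fun q => q % 2 = S.min' hS % 2)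
    (P : Polynomial ℤ)
    (hP : P = ∑ T ∈ (vnbr C \ vnbr S).powerset.filter
        (fun T => ∀ a ∈ T, ∀ b ∈ T, a ≠ b → 2 ≤ |a - b|),
      (-Polynomial.X : Polynomial ℤ) ^ T.card) :
    triGF Set.univ S * PowerSeries.X ^ (C.card - S.card)
      = (P : PowerSeries ℤ) * triGF Set.univ C := by
  set m := S.min' hS with hm
  set Mx := S.max' hS with hMx
  have hmS : m ∈ S := S.min'_mem hS
  have hMS : Mx ∈ S := S.max'_mem hS
  have hmMx : m ≤ Mx := S.le_max' m hmS
  have hSC : S ⊆ C := by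
    intro s hs
    rw [hC, Finset.mem_filter, Finset.mem_Icc]
    exact ⟨⟨S.min'_le s hs, S.le_max' s hs⟩, hal s hs m hmS⟩
  have hCal : ∀ c ∈ C, c % 2 = m % 2 := by
    intro c hc; rw [hC, Finset.mem_filter] at hc; exact hc.2
  have hSal : ∀ s ∈ S, s % 2 = m % 2 := fun s hs => hal s hs m hmS
  have hCc : ∀ c : ℤ, c ∈ C ↔ (m ≤ c ∧ c ≤ Mx ∧ c % 2 = m % 2) := by
    intro c; rw [hC, Finset.mem_filter, Finset.mem_Icc]; tauto
  have hkS : S.card ≤ C.card := Finset.card_le_card hSC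
  set k := C.card - S.card with hk
  set vC := vnbr C with hvC
  set vS := vnbr S with hvS
  set U := vC \ vS with hU
  have hMxal : Mx % 2 = m % 2 := hSal Mx hMS
  have hIcc : ∀ q : ℤ, m - 1 ≤ q → q ≤ Mx + 1 → q ∈ vC := by
    intro q h1 h2
    rw [hvC]
    by_cases hq : q % 2 = m % 2
    · exact mem_vnbr.mpr ⟨q, (hCc q).mpr ⟨by omega, by omega, hq⟩, by simp⟩
    · rcases lt_or_ge q m with h3 | h3
      · exact mem_vnbr.mpr ⟨m, (hCc m).mpr ⟨le_refl _, hmMx, rfl⟩, by rw [abs_le]; omega⟩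
      · exact mem_vnbr.mpr ⟨q - 1, (hCc (q - 1)).mpr ⟨by omega, by omega, by omega⟩,
          by rw [abs_le]; omega⟩
  have hvSC : vS ⊆ vC := by
    intro q hq
    obtain ⟨s, hs, hd⟩ := mem_vnbr.mp hq
    have h1 := S.min'_le s hs
    have h2 := S.le_max' s hs
    rw [abs_le] at hd
    exact hIcc q (by omega) (by omega)
  have hUb : ∀ p ∈ U, m + 2 ≤ p ∧ p ≤ Mx - 2 := by
    intro p hp
    rw [hU, Finset.mem_sdiff] at hp
    obtain ⟨c, hc, hd⟩ := mem_vnbr.mp hp.1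
    rw [hCc] at hc
    have h3 : ¬(|p - m| ≤ 1) := fun h => hp.2 (mem_vnbr.mpr ⟨m, hmS, h⟩)
    have h4 : ¬(|p - Mx| ≤ 1) := fun h => hp.2 (mem_vnbr.mpr ⟨Mx, hMS, h⟩)
    rw [abs_le] at hd
    rw [abs_le] at h3 h4
    omega
  have hvTC : ∀ T : Finset ℤ, T ⊆ U → vnbr T ⊆ vC := by
    intro T hTU q hq
    obtain ⟨p, hp, hd⟩ := mem_vnbr.mp hq
    have := hUb p (hTU hp)
    rw [abs_le] at hd
    exact hIcc q (by omega) (by omega)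
  have hUsubC : U ⊆ vC := by rw [hU]; exact Finset.sdiff_subset
  have hcountS := triCount_eq hSal
  have hcountC := triCount_eq hCal
  set 𝒯 := (vnbr C \ vnbr S).powerset.filter
      (fun T => ∀ a ∈ T, ∀ b ∈ T, a ≠ b → 2 ≤ |a - b|) with h𝒯
  have h𝒯mem : ∀ T : Finset ℤ, T ∈ 𝒯 ↔ (T ⊆ U ∧ Ind T) := by
    intro T
    rw [h𝒯, Finset.mem_filter, Finset.mem_powerset]
    exact Iff.rfl
  have hmaster : ∀ N : ℕ,
      ∑ T ∈ 𝒯, (-1 : ℤ) ^ T.card * (((heapFin vC N).filter fun K => tset T ⊆ K).card : ℤ)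
        = ((heapFin vS N).card : ℤ) := by
    intro N
    have hswap : ∀ T ∈ 𝒯,
        (-1 : ℤ) ^ T.card * (((heapFin vC N).filter fun K => tset T ⊆ K).card : ℤ)
          = ∑ K ∈ heapFin vC N, (if tset T ⊆ K then (-1 : ℤ) ^ T.card else 0) := by
      intro T _
      rw [Finset.natCast_card_filter, Finset.mul_sum]
      apply Finset.sum_congr rfl
      intro K _
      rw [mul_ite, mul_one, mul_zero]
    rw [Finset.sum_congr rfl hswap, Finset.sum_comm]
    have hper : ∀ K ∈ heapFin vC N,
        (∑ T ∈ 𝒯, if tset T ⊆ K then (-1 : ℤ) ^ T.card else 0)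
          = if lev0 K ⊆ vS then 1 else 0 := by
      intro K hK
      rw [mem_heapFin] at hK
      have hfeq : (𝒯.filter fun T => tset T ⊆ K) = (lev0 K ∩ U).powerset := by
        ext T
        rw [Finset.mem_filter, h𝒯mem, Finset.mem_powerset]
        constructor
        · rintro ⟨⟨hTU, _⟩, hsub⟩
          intro p hp
          rw [Finset.mem_inter]
          exact ⟨mem_lev0.mpr (hsub (mem_tset.mpr ⟨rfl, hp⟩)), hTU hp⟩
        · intro hsub
          have hsub' : tset T ⊆ K := by
            intro z hz
            rw [mem_tset] at hz
            have h5 := (Finset.mem_inter.mp (hsub hz.2)).1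
            rw [mem_lev0] at h5
            rw [show z = ((z.1, 0) : Pc) from Prod.ext rfl hz.1]
            exact h5
          exact ⟨⟨fun p hp => (Finset.mem_inter.mp (hsub hp)).2,
            ind_of_tset_subset hK.1 hsub'⟩, hsub'⟩
      rw [← Finset.sum_filter, hfeq, Finset.sum_powerset_neg_one_pow_card]
      have hiff : (lev0 K ∩ U = ∅) ↔ lev0 K ⊆ vS := by
        constructor
        · intro hemp q hq
          by_contra hnot
          have hqU : q ∈ U := by
            rw [hU, Finset.mem_sdiff]
            exact ⟨hK.2.1 hq, hnot⟩
          have : q ∈ lev0 K ∩ U := Finset.mem_inter.mpr ⟨hq, hqU⟩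
          rw [hemp] at this
          exact absurd this (Finset.notMem_empty q)
        · intro hsub
          apply Finset.eq_empty_iff_forall_notMem.mpr
          intro q hq
          rw [Finset.mem_inter] at hq
          have h6 := hsub hq.1
          have := hq.2
          rw [hU, Finset.mem_sdiff] at this
          exact this.2 h6
      exact if_congr hiff rfl rfl
    rw [Finset.sum_congr rfl hper, Finset.sum_boole]
    have hfin : ((heapFin vC N).filter fun K => lev0 K ⊆ vS) = heapFin vS N := by
      ext K
      rw [Finset.mem_filter, mem_heapFin, mem_heapFin]
      constructor
      · rintro ⟨⟨h1, _, h3⟩, h4⟩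
        exact ⟨h1, h4, h3⟩
      · rintro ⟨h1, h2, h3⟩
        exact ⟨⟨h1, h2.trans hvSC, h3⟩, h2⟩
    rw [hfin]
  ext n
  rw [PowerSeries.coeff_mul_X_pow']
  have hPcoe : (P : PowerSeries ℤ) = ∑ T ∈ 𝒯, (-PowerSeries.X : PowerSeries ℤ) ^ T.card := by
    rw [hP, ← Polynomial.coeToPowerSeries.ringHom_apply, map_sum]
    apply Finset.sum_congr rfl
    intro T _
    rw [map_pow, map_neg, Polynomial.coeToPowerSeries.ringHom_apply, Polynomial.coe_X]
  rw [hPcoe, Finset.sum_mul, map_sum]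
  have hterm : ∀ T ∈ 𝒯,
      (PowerSeries.coeff n) ((-PowerSeries.X : PowerSeries ℤ) ^ T.card * triGF Set.univ C)
        = (-1 : ℤ) ^ T.card *
          (if T.card ≤ n then (triCount Set.univ C (n - T.card) : ℤ) else 0) := by
    intro T _
    rw [neg_pow, mul_assoc]
    rw [show ((-1 : PowerSeries ℤ)) ^ T.card = PowerSeries.C ((-1 : ℤ) ^ T.card) from by
      rw [map_pow, map_neg, map_one]]
    rw [PowerSeries.coeff_C_mul, PowerSeries.coeff_X_pow_mul']
    congr 1
    split_ifs with h
    · rw [triGF, PowerSeries.coeff_mk]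
    · rfl
  rw [Finset.sum_congr rfl hterm]
  simp only [triGF, PowerSeries.coeff_mk]
  by_cases hn : C.card ≤ n
  · rw [if_pos (show k ≤ n by omega)]
    rw [hcountS (n - k), if_pos (show S.card ≤ n - k by omega)]
    rw [show n - k - S.card = n - C.card by omega]
    rw [ncard_heapSet]
    have hperT : ∀ T ∈ 𝒯,
        (-1 : ℤ) ^ T.card * (if T.card ≤ n then (triCount Set.univ C (n - T.card) : ℤ) else 0)
          = (-1 : ℤ) ^ T.card *
            (((heapFin vC (n - C.card)).filter fun K => tset T ⊆ K).card : ℤ) := by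
      intro T hT
      rw [h𝒯mem] at hT
      congr 1
      by_cases hc : T.card ≤ n - C.card
      · rw [if_pos (by omega), hcountC, if_pos (by omega)]
        rw [show n - T.card - C.card = (n - C.card) - T.card by omega]
        have hmk := heap_marked hT.2 (hT.1.trans hUsubC) (hvTC T hT.1) ((n - C.card) - T.card)
        rw [show ((n - C.card) - T.card) + T.card = n - C.card by omega] at hmk
        rw [hmk, marked_ncard]
      · have hz : ((heapFin vC (n - C.card)).filter fun K => tset T ⊆ K) = ∅ := by
          apply Finset.filter_eq_empty_iff.mpr
          intro K hK hsub
          rw [mem_heapFin] at hK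
          have := Finset.card_le_card hsub
          rw [card_tset] at this
          omega
        rw [hz]
        split_ifs with h1
        · rw [hcountC, if_neg (by omega)]
          simp
        · simp
    rw [Finset.sum_congr rfl hperT, hmaster (n - C.card)]
  · have hzero : ∀ T ∈ 𝒯,
        (-1 : ℤ) ^ T.card * (if T.card ≤ n then (triCount Set.univ C (n - T.card) : ℤ) else 0)
          = 0 := by
      intro T _
      split_ifs with h
      · rw [hcountC, if_neg (by omega)]
        simp
      · simp
    rw [Finset.sum_eq_zero hzero]
    split_ifs with h1
    · rw [hcountS, if_neg (by omega)]
      simp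
    · rfl
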